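/- Let (Ω, 𝓕, μ) be a probability space, let α : Ω → Matrix (Fin r) (Fin n) ℝ be measurable, and let γ : Ω → ℝ^n be measurable with γ(ω) belonging to the row span of α(ω) for μ-a.e. ω. Then there exists a measurable β : Ω → ℝ^r such that γ(ω) = β(ω) ⬝ α(ω) for μ-a.e. ω. -/

import Mathlib

open MeasureTheory

namespace Stmt4Aux

open Matrix

variable {r n : ℕ}

/-- Candidate solver: given index maps `e`, `f` selecting a square submatrix, solve the
restricted system by the matrix inverse and spread the solution by zeros. -/
noncomputable def solveCand (A : Matrix (Fin r) (Fin n) ℝ) (g : Fin n → ℝ) {k : ℕ}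
    (e : Fin k → Fin r) (f : Fin k → Fin n) : Fin r → ℝ :=
  fun i => ∑ j : Fin k,
    if e j = i then Matrix.vecMul (fun j' => g (f j')) ((A.submatrix e f)⁻¹) j else 0

lemma vecMul_spread (A : Matrix (Fin r) (Fin n) ℝ) {k : ℕ} (e : Fin k → Fin r)
    (x : Fin k → ℝ) :
    Matrix.vecMul (fun i => ∑ j : Fin k, if e j = i then x j else 0) A
      = Matrix.vecMul x (A.submatrix e id) := by
  classical
  funext j'
  simp only [Matrix.vecMul, dotProduct, Matrix.submatrix_apply, id]
  calc
    ∑ i, (∑ j : Fin k, if e j = i then x j else 0) * A i j'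
        = ∑ i, ∑ j : Fin k, (if e j = i then x j else 0) * A i j' := by
          simp [Finset.sum_mul]
    _ = ∑ j : Fin k, ∑ i, (if e j = i then x j else 0) * A i j' := Finset.sum_comm
    _ = ∑ j : Fin k, x j * A (e j) j' := by
          simp [ite_mul, Finset.sum_ite_eq]

lemma solveCand_spec {k : ℕ} (A : Matrix (Fin r) (Fin n) ℝ) (g : Fin n → ℝ)
    (e : Fin k → Fin r) (f : Fin k → Fin n) (c : Fin k → ℝ)
    (hM : IsUnit (A.submatrix e f)) (hg : g = Matrix.vecMul c (A.submatrix e id)) :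
    g = Matrix.vecMul (solveCand A g e f) A := by
  have hdet : IsUnit (A.submatrix e f).det := (Matrix.isUnit_iff_isUnit_det _).mp hM
  have hx : (fun j' => g (f j')) = Matrix.vecMul c (A.submatrix e f) := by
    funext j; rw [hg]; rfl
  have hxc : Matrix.vecMul (fun j' => g (f j')) ((A.submatrix e f)⁻¹) = c := by
    rw [hx, Matrix.vecMul_vecMul, Matrix.mul_nonsing_inv _ hdet, Matrix.vecMul_one]
  have h1 : Matrix.vecMul (solveCand A g e f) A
      = Matrix.vecMul (Matrix.vecMul (fun j' => g (f j')) ((A.submatrix e f)⁻¹))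
          (A.submatrix e id) := vecMul_spread A e _
  rw [h1, hxc, ← hg]

lemma exists_solver (A : Matrix (Fin r) (Fin n) ℝ) (g : Fin n → ℝ)
    (h : g ∈ Submodule.span ℝ (Set.range fun i => A i)) :
    ∃ k : ℕ, k ≤ r ∧ ∃ (e : Fin k → Fin r) (f : Fin k → Fin n),
      g = Matrix.vecMul (solveCand A g e f) A := by
  classical
  obtain ⟨b, hbsub, hbspan, hbind⟩ := exists_linearIndependent ℝ (Set.range fun i => A i)
  have hbfin : b.Finite := (Set.finite_range _).subset hbsub
  haveI : Fintype b := hbfin.fintype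
  set k := Fintype.card b with hk
  -- enumerate b
  let e1 : Fin k ≃ b := (Fintype.equivFin b).symm
  let v : Fin k → (Fin n → ℝ) := fun j => (e1 j : Fin n → ℝ)
  have hv_ind : LinearIndependent ℝ v := hbind.comp e1 e1.injective
  have hv_range : Set.range v = b := by
    have : v = Subtype.val ∘ e1 := rfl
    rw [this, Set.range_comp, Equiv.range_eq_univ, Set.image_univ, Subtype.range_coe]
  -- choose row indices
  have he : ∀ j, ∃ i, A i = v j := fun j => hbsub (hv_range ▸ Set.mem_range_self j)
  choose e hee using he
  have hB : (fun j => A.submatrix e id j) = v := funext fun j => hee j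
  -- coefficients
  have hgmem : g ∈ Submodule.span ℝ (Set.range v) := by rw [hv_range, hbspan]; exact h
  obtain ⟨c, hc⟩ := Submodule.mem_span_range_iff_exists_fun ℝ |>.mp hgmem
  have hgc : g = Matrix.vecMul c (A.submatrix e id) := by
    funext j'
    rw [← hc]
    simp only [Matrix.vecMul, dotProduct, Matrix.submatrix_apply, id,
      Finset.sum_apply, Pi.smul_apply, smul_eq_mul]
    exact Finset.sum_congr rfl fun j _ => by rw [hee j]
  -- rank of B
  set B := A.submatrix e id with hBdef
  have hrank : B.rank = k := by
    rw [← Matrix.rank_transpose, Matrix.rank_eq_finrank_span_cols, Matrix.col, Matrix.transpose_transpose]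
    rw [show Set.range B = Set.range v from congrArg Set.range hB,
      finrank_span_eq_card hv_ind, Fintype.card_fin]
  -- columns
  obtain ⟨b', hb'sub, hb'span, hb'ind⟩ := exists_linearIndependent ℝ (Set.range fun j => Bᵀ j)
  haveI : Fintype b' := (((Set.finite_range _).subset hb'sub)).fintype
  have hcard : Fintype.card b' = k := by
    have h1 : Module.finrank ℝ (Submodule.span ℝ b') = b'.toFinset.card :=
      finrank_span_set_eq_card hb'ind
    have h2 : (Set.range fun j => Bᵀ j) = Set.range B.col := rfl
    rw [h2] at hb'span
    rw [hb'span, ← Matrix.rank_eq_finrank_span_cols, hrank, Set.toFinset_card] at h1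
    exact h1.symm
  let e2 : Fin k ≃ b' := (Fintype.equivFinOfCardEq hcard).symm
  let w : Fin k → (Fin k → ℝ) := fun j => (e2 j : Fin k → ℝ)
  have hw_ind : LinearIndependent ℝ w := hb'ind.comp e2 e2.injective
  have hf : ∀ j, ∃ j'', Bᵀ j'' = w j := fun j => hb'sub (e2 j).2
  choose f hff using hf
  have hMcols : (fun j => (A.submatrix e f)ᵀ j) = w := by
    funext j; rw [← hff j]; rfl
  have hM : IsUnit (A.submatrix e f) :=
    Matrix.linearIndependent_cols_iff_isUnit.mp
      (show LinearIndependent ℝ (fun j => (A.submatrix e f)ᵀ j) from hMcols ▸ hw_ind)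
  refine ⟨k, ?_, e, f, solveCand_spec A g e f c hM hgc⟩
  haveI : Fintype (Set.range fun i => A i) := (Set.finite_range _).fintype
  calc k = Fintype.card b := rfl
    _ ≤ Fintype.card (Set.range fun i => A i) :=
        Fintype.card_le_of_injective (Set.inclusion hbsub) (Set.inclusion_injective hbsub)
    _ ≤ Fintype.card (Fin r) := Fintype.card_range_le _
    _ = r := Fintype.card_fin r

section Measurability

variable {Ω : Type*} [MeasurableSpace Ω]

lemma measurable_det {k : ℕ} {M : Ω → Matrix (Fin k) (Fin k) ℝ}
    (h : ∀ i j, Measurable fun ω => M ω i j) : Measurable fun ω => (M ω).det := by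
  simp only [Matrix.det_apply']
  exact Finset.measurable_sum _ fun σ _ =>
    (Finset.measurable_prod _ fun i _ => h _ _).const_mul _

lemma measurable_inv_entry {k : ℕ} {M : Ω → Matrix (Fin k) (Fin k) ℝ}
    (h : ∀ i j, Measurable fun ω => M ω i j) (i j : Fin k) :
    Measurable fun ω => (M ω)⁻¹ i j := by
  simp only [Matrix.inv_def, Matrix.smul_apply, smul_eq_mul, Ring.inverse_eq_inv]
  refine (measurable_det h).inv.mul ?_
  simp only [Matrix.adjugate_apply]
  apply measurable_det
  intro i' j'
  simp only [Matrix.updateRow_apply]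
  by_cases hc : i' = j
  · simp only [hc, if_true]; exact measurable_const
  · simp only [hc, if_false]; exact h _ _

lemma measurable_solveCand {k : ℕ} (e : Fin k → Fin r) (f : Fin k → Fin n)
    {α : Ω → Matrix (Fin r) (Fin n) ℝ} (hα : ∀ i j, Measurable fun ω => α ω i j)
    {γ : Ω → Fin n → ℝ} (hγ : Measurable γ) :
    Measurable fun ω => solveCand (α ω) (γ ω) e f := by
  apply measurable_pi_lambda
  intro i
  simp only [solveCand]
  apply Finset.measurable_sum
  intro j _
  by_cases hc : e j = i
  · simp only [hc, if_true]
    simp only [Matrix.vecMul, dotProduct]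
    apply Finset.measurable_sum
    intro j'' _
    exact ((measurable_pi_apply (f j'')).comp hγ).mul
      (measurable_inv_entry (fun i' j' => hα (e i') (f j')) j'' j)
  · simp only [hc, if_false]
    exact measurable_const

lemma measurable_select {Q : Type*} (L : List Q)
    (cand : Q → Ω → (Fin r → ℝ)) (hcand : ∀ q, Measurable (cand q))
    (good : Q → Set Ω) (hgood : ∀ q, MeasurableSet (good q)) :
    ∃ β : Ω → (Fin r → ℝ), Measurable β ∧
      ∀ ω, (∃ q ∈ L, ω ∈ good q) → ∃ q, ω ∈ good q ∧ β ω = cand q ω := by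
  classical
  induction L with
  | nil => exact ⟨fun _ => 0, measurable_const, fun ω h => absurd h (by simp)⟩
  | cons q L ih =>
    obtain ⟨β, hβ, hprop⟩ := ih
    refine ⟨(good q).piecewise (cand q) β, Measurable.piecewise (hgood q) (hcand q) hβ, ?_⟩
    intro ω hω
    by_cases hmem : ω ∈ good q
    · exact ⟨q, hmem, Set.piecewise_eq_of_mem _ _ _ hmem⟩
    · obtain ⟨q', hq'L, hq'⟩ := hω
      have hq'L' : q' ∈ L := by
        rcases List.mem_cons.mp hq'L with h | h
        · exact absurd (h ▸ hq') hmem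
        · exact h
      obtain ⟨q'', h1, h2⟩ := hprop ω ⟨q', hq'L', hq'⟩
      exact ⟨q'', h1, (Set.piecewise_eq_of_notMem _ _ _ hmem).trans h2⟩

end Measurability

end Stmt4Aux

/-- Measurable solvability of linear systems: if `γ(ω)` lies a.e. in the row span of a
measurable matrix field `α(ω)`, then `γ(ω) = β(ω) ⬝ α(ω)` a.e. for some measurable `β`. -/
theorem stmt_4 {Ω : Type*} [MeasurableSpace Ω] (μ : Measure Ω) [IsProbabilityMeasure μ]
    (r n : ℕ) (α : Ω → Matrix (Fin r) (Fin n) ℝ)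
    (hα : ∀ i j, Measurable fun ω => α ω i j)
    (γ : Ω → (Fin n → ℝ)) (hγ : Measurable γ)
    (hspan : ∀ᵐ ω ∂μ, γ ω ∈ Submodule.span ℝ (Set.range fun i => α ω i)) :
    ∃ β : Ω → (Fin r → ℝ), Measurable β ∧
      ∀ᵐ ω ∂μ, γ ω = Matrix.vecMul (β ω) (α ω) := by
  classical
  let Q := Σ k : Fin (r + 1), (Fin (k : ℕ) → Fin r) × (Fin (k : ℕ) → Fin n)
  let cand : Q → Ω → (Fin r → ℝ) := fun q ω => Stmt4Aux.solveCand (α ω) (γ ω) q.2.1 q.2.2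
  have hcand : ∀ q, Measurable (cand q) := fun q =>
    Stmt4Aux.measurable_solveCand q.2.1 q.2.2 hα hγ
  let good : Q → Set Ω := fun q => {ω | γ ω = Matrix.vecMul (cand q ω) (α ω)}
  have hgood : ∀ q, MeasurableSet (good q) := by
    intro q
    apply measurableSet_eq_fun hγ
    apply measurable_pi_lambda
    intro j
    simp only [Matrix.vecMul, dotProduct]
    exact Finset.measurable_sum _ fun i _ =>
      ((measurable_pi_apply i).comp (hcand q)).mul (hα i j)
  obtain ⟨β, hβ, hprop⟩ :=
    Stmt4Aux.measurable_select (Finset.univ.toList (α := Q)) cand hcand good hgood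
  refine ⟨β, hβ, ?_⟩
  filter_upwards [hspan] with ω hω
  obtain ⟨k, hk, e, f, hsol⟩ := Stmt4Aux.exists_solver (α ω) (γ ω) hω
  have hmem : ω ∈ good ⟨⟨k, Nat.lt_succ_of_le hk⟩, e, f⟩ := hsol
  obtain ⟨q'', h1, h2⟩ := hprop ω ⟨_, by simp [Finset.mem_toList], hmem⟩
  rw [h2]
  exact h1
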